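/- Let f(x) = a_0 x + a_1 x^{q^s} + … + a_k x^{q^{sk}} be a q^s-linearized polynomial over F_{q^n} with gcd(s,n) = 1, k ≤ n-1, and not all coefficients zero. Then the kernel of f (as an F_q-linear endomorphism of F_{q^n}) has F_q-dimension at most k; moreover, if the kernel has dimension exactly k, then N_{q^n/q}(a_0) = (-1)^{nk} N_{q^n/q}(a_k). -/

import Mathlib

set_option linter.unusedSectionVars false
set_option maxHeartbeats 1000000

open Module LinearMap Finset Polynomial

section Aux

variable {Fq L : Type*} [Field Fq] [Field L] [Algebra Fq L] [Fintype Fq] [Fintype L]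
variable {p m q s : ℕ} [Fact p.Prime] [CharP L p]

noncomputable def qpow (hq : Fintype.card Fq = q) (hqm : q = p ^ m) (i : ℕ) : L →ₗ[Fq] L where
  toFun z := z ^ q ^ i
  map_add' x y := by
    subst hqm; rw [← pow_mul]; exact add_pow_char_pow x y p (m * i)
  map_smul' c z := by
    simp only [Algebra.smul_def, RingHom.id_apply, mul_pow, ← map_pow]
    congr 2
    rw [← hq]
    exact FiniteField.pow_card_pow _ _

@[simp] lemma qpow_apply (hq : Fintype.card Fq = q) (hqm : q = p ^ m) (i : ℕ) (z : L) :
    qpow hq hqm i z = z ^ q ^ i := rfl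

noncomputable def lin (hq : Fintype.card Fq = q) (hqm : q = p ^ m) (s k : ℕ) (a : ℕ → L) :
    L →ₗ[Fq] L := ∑ i ∈ Finset.range (k + 1), a i • qpow hq hqm (s * i)

lemma lin_apply (hq : Fintype.card Fq = q) (hqm : q = p ^ m) (s k : ℕ) (a : ℕ → L) (z : L) :
    lin hq hqm s k a z = ∑ i ∈ Finset.range (k + 1), a i * z ^ q ^ (s * i) := by
  simp [lin]

lemma pow_qpow (z : L) (i j : ℕ) : (z ^ q ^ i) ^ q ^ j = z ^ q ^ (i + j) := by
  rw [← pow_mul, ← pow_add]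

lemma sub_qpow (hqm : q = p ^ m) (u v : L) (j : ℕ) :
    (u - v) ^ q ^ j = u ^ q ^ j - v ^ q ^ j := by
  subst hqm; rw [← pow_mul]; exact sub_pow_char_pow u v (m * j)

theorem key (hq : Fintype.card Fq = q) (hqm : q = p ^ m) (hs : 0 < s)
    (hfix : ∀ z : L, z ^ q ^ s = z → z ∈ (algebraMap Fq L).range) :
    ∀ (k : ℕ) (a : ℕ → L), (∃ i ∈ Finset.range (k + 1), a i ≠ 0) →
      Module.finrank Fq (LinearMap.ker (lin hq hqm s k a)) ≤ k ∧
      (Module.finrank Fq (LinearMap.ker (lin hq hqm s k a)) = k →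
        Algebra.norm Fq (a 0) =
          (-1) ^ (Module.finrank Fq L * k) * Algebra.norm Fq (a k)) := by
  intro k
  induction k with
  | zero =>
    intro a ha
    have ha0 : a 0 ≠ 0 := by simpa using ha
    have hker : LinearMap.ker (lin hq hqm s 0 a) = ⊥ := by
      rw [LinearMap.ker_eq_bot']
      intro z hz
      rw [lin_apply] at hz
      simp only [zero_add, Finset.sum_range_one, mul_zero, pow_zero, pow_one] at hz
      exact (mul_eq_zero.mp hz).resolve_left ha0
    rw [hker]
    constructor
    · simp
    · intro _; simp
  | succ k ih =>
    intro a ha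
    by_cases hbot : LinearMap.ker (lin hq hqm s (k + 1) a) = ⊥
    · rw [hbot]
      constructor
      · simp
      · intro h; rw [finrank_bot] at h; omega
    · obtain ⟨x, hxker, hx0⟩ := (Submodule.ne_bot_iff _).mp hbot
      have hxk : lin hq hqm s (k + 1) a x = 0 := LinearMap.mem_ker.mp hxker
      set X : ℕ → L := fun i => x ^ q ^ (s * i) with hXdef
      have hX0 : ∀ i : ℕ, X i ≠ 0 := fun i => pow_ne_zero _ hx0
      set S : ℕ → L := fun j => ∑ i ∈ Finset.range (j + 1), a i * X i with hSdef
      have hS : S (k + 1) = 0 := by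
        rw [lin_apply] at hxk
        exact hxk
      set c : L := X 1 / X 0 with hcdef
      have hc0 : c ≠ 0 := div_ne_zero (hX0 1) (hX0 0)
      set b : ℕ → L := fun j => -S j / X (j + 1) with hbdef
      set P : L →ₗ[Fq] L := qpow hq hqm s - c • LinearMap.id with hPdef
      have hPapp : ∀ y : L, P y = y ^ q ^ s - c * y := by
        intro y; simp [hPdef]
      have hXsucc : ∀ j : ℕ, (X 1) ^ q ^ (s * j) = X (j + 1) := by
        intro j
        simp only [hXdef]
        rw [pow_qpow]
        have : s * 1 + s * j = s * (j + 1) := by ring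
        rw [this]
      have hXj : ∀ j : ℕ, (X 0) ^ q ^ (s * j) = X j := by
        intro j
        simp only [hXdef]
        rw [pow_qpow]
        have : s * 0 + s * j = s * j := by ring
        rw [this]
      have hcX : ∀ j : ℕ, c ^ q ^ (s * j) = X (j + 1) / X j := by
        intro j
        rw [hcdef, div_pow, hXsucc, hXj]
      have hcx : c * x = x ^ q ^ s := by
        have hx1 : X 1 = x ^ q ^ s := by simp only [hXdef, mul_one]
        have hx00 : X 0 = x := by simp only [hXdef, mul_zero, pow_zero, pow_one]
        rw [hcdef, hx1, hx00]
        field_simp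
      have hGP : ∀ y : L, lin hq hqm s k b (P y) = lin hq hqm s (k + 1) a y := by
        intro y
        set U : ℕ → L := fun j =>
          -S j * y ^ q ^ (s * j) / X j + ∑ i ∈ Finset.range (j + 1), a i * y ^ q ^ (s * i)
          with hUdef
        have hterm : ∀ j : ℕ, b j * (P y) ^ q ^ (s * j) = U (j + 1) - U j := by
          intro j
          have e1 : (P y) ^ q ^ (s * j)
              = y ^ q ^ (s * (j + 1)) - (X (j + 1) / X j) * y ^ q ^ (s * j) := by
            rw [hPapp, sub_qpow hqm, mul_pow, hcX j]
            have e2 : (y ^ q ^ s) ^ q ^ (s * j) = y ^ q ^ (s * (j + 1)) := by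
              rw [pow_qpow]
              have : s + s * j = s * (j + 1) := by ring
              rw [this]
            rw [e2]
          have hSsucc : S (j + 1) = S j + a (j + 1) * X (j + 1) :=
            Finset.sum_range_succ (fun i => a i * X i) (j + 1)
          have hysum : (∑ i ∈ Finset.range (j + 2), a i * y ^ q ^ (s * i))
              = (∑ i ∈ Finset.range (j + 1), a i * y ^ q ^ (s * i))
                + a (j + 1) * y ^ q ^ (s * (j + 1)) :=
            Finset.sum_range_succ (fun i => a i * y ^ q ^ (s * i)) (j + 1)
          simp only [hUdef, hbdef]
          rw [e1, hSsucc, hysum]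
          have h1 := hX0 j
          have h2 := hX0 (j + 1)
          field_simp
          ring
        have htel : lin hq hqm s k b (P y) = U (k + 1) - U 0 := by
          rw [lin_apply]
          calc (∑ j ∈ Finset.range (k + 1), b j * (P y) ^ q ^ (s * j))
              = ∑ j ∈ Finset.range (k + 1), (U (j + 1) - U j) :=
                Finset.sum_congr rfl fun j _ => hterm j
            _ = U (k + 1) - U 0 := Finset.sum_range_sub U (k + 1)
        have hUtop : U (k + 1) = lin hq hqm s (k + 1) a y := by
          simp only [hUdef]
          rw [hS, lin_apply]
          simp
        have hU0 : U 0 = 0 := by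
          have hS0 : S 0 = a 0 * X 0 := Finset.sum_range_one (f := fun i => a i * X i)
          simp only [hUdef]
          rw [hS0]
          simp only [mul_zero, pow_zero, pow_one, zero_add, Finset.sum_range_one]
          have h0 := hX0 0
          field_simp
          ring
        rw [htel, hUtop, hU0, sub_zero]
      -- b is not identically zero on range (k+1)
      have hbne : ∃ j ∈ Finset.range (k + 1), b j ≠ 0 := by
        by_contra hcon
        push_neg at hcon
        have hSz : ∀ j, j ≤ k → S j = 0 := by
          intro j hj
          have hbj := hcon j (Finset.mem_range.mpr (by omega))
          simp only [hbdef] at hbj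
          have := (div_eq_zero_iff.mp hbj).resolve_right (hX0 (j + 1))
          simpa using this
        have haz : ∀ i ∈ Finset.range (k + 2), a i = 0 := by
          intro i hi
          rw [Finset.mem_range] at hi
          rcases Nat.eq_zero_or_pos i with rfl | hipos
          · have h0 : S 0 = a 0 * X 0 := Finset.sum_range_one (f := fun i => a i * X i)
            have h1 := hSz 0 (by omega)
            rw [h0] at h1
            exact (mul_eq_zero.mp h1).resolve_right (hX0 0)
          · obtain ⟨j, rfl⟩ : ∃ j, i = j + 1 := ⟨i - 1, by omega⟩
            have h2 : S (j + 1) = S j + a (j + 1) * X (j + 1) :=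
              Finset.sum_range_succ (fun i => a i * X i) (j + 1)
            have hj0 : S j = 0 := hSz j (by omega)
            have hj1 : S (j + 1) = 0 := by
              rcases Nat.lt_or_ge (j + 1) (k + 1) with h | h
              · exact hSz (j + 1) (by omega)
              · have : j + 1 = k + 1 := by omega
                rw [this]; exact hS
            rw [hj1, hj0, zero_add] at h2
            exact (mul_eq_zero.mp h2.symm).resolve_right (hX0 (j + 1))
        obtain ⟨i, hi, hai⟩ := ha
        exact hai (haz i hi)
      -- kernel of P has dimension at most 1
      have hkerP : Module.finrank Fq (LinearMap.ker P) ≤ 1 := by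
        have hle : LinearMap.ker P ≤ Submodule.span Fq {x} := by
          intro y hy
          have hy' : y ^ q ^ s = c * y := by
            have h := LinearMap.mem_ker.mp hy
            rw [hPapp] at h
            linear_combination h
          by_cases hy0 : y = 0
          · simp [hy0]
          · have hz : (y / x) ^ q ^ s = y / x := by
              rw [div_pow, hy', ← hcx, mul_div_mul_left _ _ hc0]
            obtain ⟨t, ht⟩ := hfix (y / x) hz
            have hyx : y = t • x := by
              rw [Algebra.smul_def, ht]
              field_simp
            rw [hyx]
            exact Submodule.smul_mem _ _ (Submodule.mem_span_singleton_self x)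
        calc Module.finrank Fq (LinearMap.ker P)
            ≤ Module.finrank Fq (Submodule.span Fq {x}) := Submodule.finrank_mono hle
          _ = 1 := finrank_span_singleton hx0
      -- restriction map
      have hmap : ∀ y ∈ LinearMap.ker (lin hq hqm s (k + 1) a),
          P y ∈ LinearMap.ker (lin hq hqm s k b) := by
        intro y hy
        rw [LinearMap.mem_ker] at hy ⊢
        rw [hGP y]
        exact hy
      set φ := P.restrict hmap with hφ
      have hrn := LinearMap.finrank_range_add_finrank_ker φ
      have hkφ : Module.finrank Fq (LinearMap.ker φ) ≤ 1 := by
        let ι : LinearMap.ker φ →ₗ[Fq] L :=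
          (LinearMap.ker (lin hq hqm s (k + 1) a)).subtype.comp (LinearMap.ker φ).subtype
        have hι : ∀ y : LinearMap.ker φ, ι y ∈ LinearMap.ker P := by
          intro y
          have hy2 : φ y.1 = 0 := LinearMap.mem_ker.mp y.2
          have hcoe : (φ y.1 : L) = P (y.1 : L) := rfl
          rw [LinearMap.mem_ker]
          show P (y.1 : L) = 0
          rw [← hcoe, hy2]
          rfl
        let μ : LinearMap.ker φ →ₗ[Fq] LinearMap.ker P := ι.codRestrict _ hι
        have hμinj : Function.Injective μ := by
          intro y z h
          apply Subtype.ext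
          apply Subtype.ext
          exact congrArg (fun w : LinearMap.ker P => (w : L)) h
        calc Module.finrank Fq (LinearMap.ker φ)
            ≤ Module.finrank Fq (LinearMap.ker P) :=
              LinearMap.finrank_le_finrank_of_injective hμinj
          _ ≤ 1 := hkerP
      have hrange : Module.finrank Fq (LinearMap.range φ)
          ≤ Module.finrank Fq (LinearMap.ker (lin hq hqm s k b)) :=
        Submodule.finrank_le _
      obtain ⟨hIH1, hIH2⟩ := ih b hbne
      constructor
      · omega
      · intro heq
        have h1 : Module.finrank Fq (LinearMap.ker (lin hq hqm s k b)) = k := by omega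
        have hnorm := hIH2 h1
        have hb0 : a 0 = -1 * b 0 * c := by
          have hS0 : S 0 = a 0 * X 0 := Finset.sum_range_one (f := fun i => a i * X i)
          simp only [hbdef, hcdef, hS0]
          have h0 := hX0 0
          have h1' := hX0 1
          field_simp

        have hbk : b k = a (k + 1) := by
          have h2 : S (k + 1) = S k + a (k + 1) * X (k + 1) :=
            Finset.sum_range_succ (fun i => a i * X i) (k + 1)
          have h3 : S k = -(a (k + 1) * X (k + 1)) := by
            rw [hS] at h2
            linear_combination -h2
          simp only [hbdef]
          rw [h3]
          have h4 := hX0 (k + 1)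
          field_simp
        have hNx : Algebra.norm Fq x ≠ 0 := by
          rw [Algebra.norm_ne_zero_iff]
          exact hx0
        have hNc : Algebra.norm Fq c = 1 := by
          have hmul : Algebra.norm Fq c * Algebra.norm Fq x = Algebra.norm Fq x := by
            rw [← map_mul, hcx, map_pow]
            rw [← hq]
            exact FiniteField.pow_card_pow _ _
          have := mul_right_cancel₀ hNx (hmul.trans (one_mul (Algebra.norm Fq x)).symm)
          exact this
        have hN1 : Algebra.norm Fq (-1 : L) = (-1 : Fq) ^ (Module.finrank Fq L) := by
          have : (-1 : L) = algebraMap Fq L (-1) := by simp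
          rw [this, Algebra.norm_algebraMap]
        rw [hb0, map_mul, map_mul, hNc, mul_one, hN1, hnorm, hbk]
        have : Module.finrank Fq L * (k + 1) = Module.finrank Fq L * k + Module.finrank Fq L := by
          ring
        rw [this, pow_add]
        ring

lemma mem_range_of_pow_card (hq : Fintype.card Fq = q) (z : L) (hz : z ^ q = z) :
    z ∈ (algebraMap Fq L).range := by
  by_contra h
  classical
  set T : Finset L := Finset.image (algebraMap Fq L) Finset.univ with hT
  have hq1 : 1 < q := hq ▸ Fintype.one_lt_card
  have hTcard : T.card = q := by
    rw [hT, Finset.card_image_of_injective _ (algebraMap Fq L).injective,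
      Finset.card_univ, hq]
  have hzT : z ∉ T := by
    intro hzT
    obtain ⟨t, _, ht⟩ := Finset.mem_image.mp hzT
    exact h ⟨t, ht⟩
  have hroot : ∀ w ∈ insert z T, IsRoot (X ^ q - X : L[X]) w := by
    intro w hw
    rcases Finset.mem_insert.mp hw with rfl | hw
    · simp [IsRoot, hz]
    · obtain ⟨t, _, ht⟩ := Finset.mem_image.mp hw
      have : w ^ q = w := by
        rw [← ht, ← map_pow]
        congr 1
        rw [← hq]; exact FiniteField.pow_card t
      simp [IsRoot, this]
  have hne : (X ^ q - X : L[X]) ≠ 0 := FiniteField.X_pow_card_sub_X_ne_zero L hq1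
  have hsub : (insert z T).val ⊆ (X ^ q - X : L[X]).roots := by
    intro w hw
    rw [Polynomial.mem_roots hne]
    exact hroot w hw
  have hcard := Polynomial.card_le_degree_of_subset_roots hsub
  rw [FiniteField.X_pow_card_sub_X_natDegree_eq L hq1,
    Finset.card_insert_of_notMem hzT, hTcard] at hcard
  omega


lemma fixed_mem_range (hq : Fintype.card Fq = q) (hn : Module.finrank Fq L = n)
    (hs : 0 < s) (hsn : Nat.gcd s n = 1) (z : L) (hz : z ^ q ^ s = z) :
    z ∈ (algebraMap Fq L).range := by
  have hn0 : 0 < n := hn ▸ Module.finrank_pos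
  have cardL : Fintype.card L = q ^ n := by
    rw [← hq, ← hn]; exact card_eq_pow_finrank
  -- iterate the `q^s` fixed-point property
  have iter1 : ∀ t : ℕ, z ^ q ^ (s * t) = z := by
    intro t
    induction t with
    | zero => simp
    | succ t ih =>
      have : s * (t + 1) = s * t + s := by ring
      rw [this, ← pow_qpow, ih, hz]
  have iter2 : ∀ (u r : ℕ), z ^ q ^ (n * u + r) = z ^ q ^ r := by
    intro u r
    induction u with
    | zero => simp
    | succ u ih =>
      have : n * (u + 1) + r = (n * u + r) + n := by ring
      rw [this, ← pow_qpow, ih, ← cardL, FiniteField.pow_card]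
  -- find t, u with s * t = n * u + 1
  obtain ⟨t, u, htu⟩ : ∃ t u : ℕ, s * t = n * u + 1 := by
    haveI : NeZero n := ⟨hn0.ne'⟩
    obtain ⟨t₀, ht₀⟩ := ZMod.natCast_zmod_surjective (n := n)
      ((ZMod.unitOfCoprime s hsn)⁻¹ : (ZMod n)ˣ)
    have hmod : ((s * (t₀ + n) : ℕ) : ZMod n) = ((1 : ℕ) : ZMod n) := by
      push_cast
      rw [ZMod.natCast_self, ht₀]
      have : ((s : ZMod n)) = ((ZMod.unitOfCoprime s hsn : (ZMod n)ˣ) : ZMod n) := by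
        rw [ZMod.coe_unitOfCoprime]
      rw [this, add_zero, ← Units.val_mul, mul_inv_cancel, Units.val_one]

    rw [ZMod.natCast_eq_natCast_iff] at hmod
    have h1 : 1 ≤ s * (t₀ + n) := by
      have : 1 ≤ t₀ + n := by omega
      exact Nat.one_le_iff_ne_zero.mpr (by positivity)
    have hdvd : n ∣ s * (t₀ + n) - 1 := (Nat.modEq_iff_dvd' h1).mp hmod.symm
    obtain ⟨u, hu⟩ := hdvd
    exact ⟨t₀ + n, u, by omega⟩
  have : z ^ q ^ 1 = z := by rw [← iter2 u 1, ← htu, iter1]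
  exact mem_range_of_pow_card hq z (by simpa using this)

end Aux

/-- Kernel bound for `q^s`-linearized polynomials (Gow–Quinlan / Guralnick): the root set of
`a_0 x + a_1 x^{q^s} + ⋯ + a_k x^{q^{sk}}` has size at most `q^k` (i.e. `F_q`-dimension at
most `k`), and if it has size exactly `q^k` then `N(a_0) = (-1)^{nk} N(a_k)`. -/
theorem linearized_kernel_bound (Fq L : Type*) [Field Fq] [Field L] [Algebra Fq L]
    [Fintype Fq] [Fintype L] (q s n k : ℕ) (hq : Fintype.card Fq = q)
    (hn : Module.finrank Fq L = n) (hs : 0 < s) (hsn : Nat.gcd s n = 1) (hk : k ≤ n - 1)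
    (a : Fin (k + 1) → L) (ha : ∃ i, a i ≠ 0) :
    Nat.card {x : L // ∑ i : Fin (k + 1), a i * x ^ q ^ (s * (i : ℕ)) = 0} ≤ q ^ k ∧
      (Nat.card {x : L // ∑ i : Fin (k + 1), a i * x ^ q ^ (s * (i : ℕ)) = 0} = q ^ k →
        Algebra.norm Fq (a 0) = (-1) ^ (n * k) * Algebra.norm Fq (a (Fin.last k))) := by
  classical
  obtain ⟨m, hp, hcard⟩ := FiniteField.card Fq (ringChar Fq)
  haveI : Fact (ringChar Fq).Prime := ⟨hp⟩
  haveI : CharP L (ringChar Fq) :=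
    charP_of_injective_algebraMap (algebraMap Fq L).injective _
  have hqm : q = (ringChar Fq) ^ (m : ℕ) := by rw [← hq, hcard]
  have hfix : ∀ z : L, z ^ q ^ s = z → z ∈ (algebraMap Fq L).range :=
    fun z hz => fixed_mem_range hq hn hs hsn z hz
  set a' : ℕ → L := fun i => if h : i < k + 1 then a ⟨i, h⟩ else 0 with ha'def
  have ha'ne : ∃ i ∈ Finset.range (k + 1), a' i ≠ 0 := by
    obtain ⟨i, hi⟩ := ha
    refine ⟨(i : ℕ), Finset.mem_range.mpr i.isLt, ?_⟩
    simpa [ha'def, i.isLt, Nat.le_of_lt_succ i.isLt] using hi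
  obtain ⟨h1, h2⟩ := key hq hqm hs hfix k a' ha'ne
  have hsetker : ∀ z : L,
      (∑ i : Fin (k + 1), a i * z ^ q ^ (s * (i : ℕ)) = 0)
        ↔ z ∈ LinearMap.ker (lin hq hqm s k a') := by
    intro z
    rw [LinearMap.mem_ker, lin_apply]
    have hsum : (∑ i ∈ Finset.range (k + 1), a' i * z ^ q ^ (s * i))
        = ∑ i : Fin (k + 1), a i * z ^ q ^ (s * (i : ℕ)) := by
      rw [Finset.sum_range]
      exact Fintype.sum_congr _ _ (fun i => by simp [ha'def, i.isLt, Nat.le_of_lt_succ i.isLt, not_lt.mpr (Nat.le_of_lt_succ i.isLt)])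
    rw [hsum]
  have hcardker : Nat.card {x : L // ∑ i : Fin (k + 1), a i * x ^ q ^ (s * (i : ℕ)) = 0}
      = q ^ Module.finrank Fq (LinearMap.ker (lin hq hqm s k a')) := by
    rw [Nat.card_congr (Equiv.subtypeEquivRight hsetker)]
    haveI : Fintype (LinearMap.ker (lin hq hqm s k a')) := Fintype.ofFinite _
    rw [Nat.card_eq_fintype_card]
    rw [card_eq_pow_finrank (K := Fq), hq]
  have hq1 : 1 < q := hq ▸ Fintype.one_lt_card
  constructor
  · rw [hcardker]
    exact Nat.pow_le_pow_right (by omega) h1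
  · intro hcard2
    rw [hcardker] at hcard2
    have hd : Module.finrank Fq (LinearMap.ker (lin hq hqm s k a')) = k :=
      Nat.pow_right_injective (by omega) hcard2
    have hfin := h2 hd
    rw [hn] at hfin
    have e0 : a' 0 = a 0 := by simp [ha'def]
    have ek : a' k = a (Fin.last k) := by
      simp only [ha'def, Nat.lt_succ_self, dif_pos]
      rfl
    rwa [e0, ek] at hfin
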